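/- Let ρ₁ and ρ₂ be density matrices on a finite-dimensional complex Hilbert space H and let p ∈ [0,1]. For every effect E (0 ≤ E ≤ I), the reliability for distinguishing ρ₁ (prior p) from ρ₂ (prior 1−p) satisfies R(ρ₁,ρ₂,E) = p·tr(E ρ₁) + (1−p)·tr((I−E) ρ₂) = 1 − p + tr(E·(p ρ₁ − (1−p) ρ₂)), and the maximum of R(ρ₁,ρ₂,E) over all effects E equals 1 − p + tr( (p ρ₁ − (1−p) ρ₂)⁺ ), i.e., 1 − p plus the sum of the positive eigenvalues of p ρ₁ − (1−p) ρ₂. -/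

import Mathlib

open scoped InnerProductSpace
open Finset

section helpers
variable {H : Type*} [NormedAddCommGroup H] [InnerProductSpace ℂ H] [FiniteDimensional ℂ H]

private lemma trace_eq_sum_inner' (b : OrthonormalBasis (Fin (Module.finrank ℂ H)) ℂ H)
    (T : H →L[ℂ] H) :
    LinearMap.trace ℂ H ↑T = ∑ i, ⟪b i, T (b i)⟫_ℂ := by
  rw [LinearMap.trace_eq_matrix_trace ℂ b.toBasis, Matrix.trace]
  simp [Matrix.diag, LinearMap.toMatrix_apply, OrthonormalBasis.coe_toBasis_repr_apply,
    OrthonormalBasis.repr_apply_apply]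

private lemma trace_re_nonneg' {T : H →L[ℂ] H} (hT : T.IsPositive) :
    0 ≤ (LinearMap.trace ℂ H ↑T).re := by
  rw [trace_eq_sum_inner' (stdOrthonormalBasis ℂ H) T, Complex.re_sum]
  refine Finset.sum_nonneg fun i _ => ?_
  have h := hT.re_inner_nonneg_right (stdOrthonormalBasis ℂ H i)
  simpa using h

private lemma trace_clm_comm (f g : H →L[ℂ] H) :
    LinearMap.trace ℂ H ↑(f ∘L g) = LinearMap.trace ℂ H ↑(g ∘L f) := by
  rw [ContinuousLinearMap.toLinearMap_comp, ContinuousLinearMap.toLinearMap_comp,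
    LinearMap.trace_comp_comm']

private lemma clm_one_comp {R M : Type*} [Semiring R] [TopologicalSpace M] [AddCommMonoid M]
    [Module R M] (f : M →L[R] M) : (1 : M →L[R] M) ∘L f = f := by
  rw [ContinuousLinearMap.one_def, ContinuousLinearMap.id_comp]

private lemma effect_proj_bound {E Q : H →L[ℂ] H} (hE : E.IsPositive)
    (hQsa : IsSelfAdjoint Q) (hQ : Q ∘L Q = Q) :
    0 ≤ (LinearMap.trace ℂ H ↑(E ∘L Q)).re := by
  have h1 : LinearMap.trace ℂ H ↑(E ∘L Q) = LinearMap.trace ℂ H ↑(Q ∘L E ∘L Q) := by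
    conv_lhs => rw [← hQ]
    rw [show E ∘L Q ∘L Q = (E ∘L Q) ∘L Q from rfl, trace_clm_comm (E ∘L Q) Q]
  rw [h1]
  have h2 := hE.conj_adjoint Q
  rw [← ContinuousLinearMap.star_eq_adjoint, hQsa.star_eq] at h2
  exact trace_re_nonneg' h2

end helpers

/-- Let `ρ₁, ρ₂` be density matrices on a finite-dimensional complex Hilbert space and
`p ∈ [0,1]`. For every effect `E` (`0 ≤ E ≤ I`), the reliability for distinguishing
`ρ₁` (prior `p`) from `ρ₂` (prior `1-p`) satisfies
`R(ρ₁,ρ₂,E) = p·tr(E ρ₁) + (1-p)·tr((I-E) ρ₂) = 1 - p + tr(E·(p ρ₁ - (1-p) ρ₂))`,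
and the maximum of `R(ρ₁,ρ₂,E)` over all effects `E` equals `1 - p` plus the sum of
the positive eigenvalues of `A = p ρ₁ - (1-p) ρ₂`, i.e. `1 - p + tr(A⁺)` (here `A` is
given by its spectral decomposition `A = ∑ⱼ λⱼ Pⱼ`). -/
theorem stmt_13
    {H : Type*} [NormedAddCommGroup H] [InnerProductSpace ℂ H] [FiniteDimensional ℂ H]
    (ρ₁ ρ₂ : H →L[ℂ] H)
    (hρ₁ : ρ₁.IsPositive) (hρ₁tr : LinearMap.trace ℂ H ↑ρ₁ = 1)
    (hρ₂ : ρ₂.IsPositive) (hρ₂tr : LinearMap.trace ℂ H ↑ρ₂ = 1)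
    (p : ℝ) (hp : p ∈ Set.Icc (0 : ℝ) 1)
    (m : ℕ) (lam : Fin m → ℝ) (P : Fin m → H →L[ℂ] H)
    (hPsa : ∀ j, IsSelfAdjoint (P j))
    (hPidem : ∀ j, P j ∘L P j = P j)
    (hPorth : ∀ i j, i ≠ j → P i ∘L P j = 0)
    (hPsum : ∑ j, P j = 1)
    (hspec : (p : ℂ) • ρ₁ - ((1 - p : ℝ) : ℂ) • ρ₂ = ∑ j, (lam j : ℂ) • P j) :
    (∀ E : H →L[ℂ] H, E.IsPositive → (1 - E).IsPositive →
      p * (LinearMap.trace ℂ H ↑(E ∘L ρ₁)).re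
        + (1 - p) * (LinearMap.trace ℂ H ↑((1 - E) ∘L ρ₂)).re
      = 1 - p + (LinearMap.trace ℂ H
          ↑(E ∘L ((p : ℂ) • ρ₁ - ((1 - p : ℝ) : ℂ) • ρ₂))).re)
    ∧ IsGreatest
        {x : ℝ | ∃ E : H →L[ℂ] H, (E.IsPositive ∧ (1 - E).IsPositive) ∧
          x = p * (LinearMap.trace ℂ H ↑(E ∘L ρ₁)).re
            + (1 - p) * (LinearMap.trace ℂ H ↑((1 - E) ∘L ρ₂)).re}
        (1 - p + (LinearMap.trace ℂ H
          ↑(∑ j ∈ univ.filter (fun j => 0 < lam j), (lam j : ℂ) • P j)).re) := by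
  set A : H →L[ℂ] H := (p : ℂ) • ρ₁ - ((1 - p : ℝ) : ℂ) • ρ₂ with hA
  -- Part 1
  have part1 : ∀ E : H →L[ℂ] H,
      p * (LinearMap.trace ℂ H ↑(E ∘L ρ₁)).re
        + (1 - p) * (LinearMap.trace ℂ H ↑((1 - E) ∘L ρ₂)).re
      = 1 - p + (LinearMap.trace ℂ H ↑(E ∘L A)).re := by
    intro E
    have h2 : LinearMap.trace ℂ H ↑((1 - E) ∘L ρ₂)
        = 1 - LinearMap.trace ℂ H ↑(E ∘L ρ₂) := by
      rw [ContinuousLinearMap.sub_comp, clm_one_comp]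
      simp [hρ₂tr]
    have h3 : LinearMap.trace ℂ H ↑(E ∘L A)
        = (p : ℂ) * LinearMap.trace ℂ H ↑(E ∘L ρ₁)
          - ((1 - p : ℝ) : ℂ) * LinearMap.trace ℂ H ↑(E ∘L ρ₂) := by
      rw [hA, ContinuousLinearMap.comp_sub, ContinuousLinearMap.comp_smul,
        ContinuousLinearMap.comp_smul]
      simp [smul_eq_mul]
    rw [h2, h3]
    simp [Complex.sub_re, Complex.re_ofReal_mul]
    ring
  refine ⟨fun E _ _ => part1 E, ?_, ?_⟩
  · -- membership : take E₀ = ∑_{λⱼ>0} Pⱼ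
    set S : Finset (Fin m) := univ.filter (fun j => 0 < lam j) with hS
    set E₀ : H →L[ℂ] H := ∑ j ∈ S, P j with hE₀
    have hPpos : ∀ j, (P j).IsPositive := fun j => by
      have h := (ContinuousLinearMap.isPositive_one (E := H)).adjoint_conj (P j)
      rwa [← ContinuousLinearMap.star_eq_adjoint, (hPsa j).star_eq,
        clm_one_comp, hPidem j] at h
    have hsumpos : ∀ s : Finset (Fin m), (∑ j ∈ s, P j).IsPositive := fun s =>
      Finset.sum_induction P _ (fun _ _ ha hb => ha.add hb)
        ContinuousLinearMap.isPositive_zero (fun j _ => hPpos j)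
    have hE₀pos : E₀.IsPositive := hsumpos S
    have hE₀c : 1 - E₀ = ∑ j ∈ univ.filter (fun j => ¬ 0 < lam j), P j := by
      rw [← hPsum, ← Finset.sum_filter_add_sum_filter_not univ (fun j => 0 < lam j) P]
      rw [hE₀, hS]
      abel
    have hE₀cpos : (1 - E₀).IsPositive := hE₀c ▸ hsumpos _
    have hPij : ∀ i j, P i ∘L P j = if i = j then P j else 0 := by
      intro i j
      by_cases h : i = j
      · subst h; simp [hPidem i]
      · simp [h, hPorth i j h]
    have hcomp : E₀ ∘L A = ∑ j ∈ S, (lam j : ℂ) • P j := by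
      rw [hspec, ContinuousLinearMap.comp_finset_sum]
      have : ∀ j, E₀ ∘L ((lam j : ℂ) • P j)
          = if j ∈ S then (lam j : ℂ) • P j else 0 := by
        intro j
        rw [ContinuousLinearMap.comp_smul, hE₀, ContinuousLinearMap.finset_sum_comp]
        simp only [hPij, Finset.sum_ite_eq']
        split <;> simp
      simp only [this]
      rw [Finset.sum_ite_mem, Finset.univ_inter]
    refine ⟨E₀, ⟨hE₀pos, hE₀cpos⟩, ?_⟩
    rw [part1 E₀, hcomp]
  · -- upper bound
    rintro x ⟨E, ⟨hE, hE'⟩, rfl⟩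
    rw [part1 E]
    gcongr 1 - p + ?_
    -- tr(E∘A).re ≤ tr(∑_{S} λⱼ Pⱼ).re
    have hEA : LinearMap.trace ℂ H ↑(E ∘L A)
        = ∑ j, (lam j : ℂ) * LinearMap.trace ℂ H ↑(E ∘L P j) := by
      rw [hspec, ContinuousLinearMap.comp_finset_sum]
      simp [ContinuousLinearMap.comp_smul, smul_eq_mul]
    have hRHS : LinearMap.trace ℂ H
        ↑(∑ j ∈ univ.filter (fun j => 0 < lam j), (lam j : ℂ) • P j)
        = ∑ j ∈ univ.filter (fun j => 0 < lam j),
            (lam j : ℂ) * LinearMap.trace ℂ H ↑(P j) := by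
      simp [smul_eq_mul]
    have key : ∀ j, 0 ≤ (LinearMap.trace ℂ H ↑(E ∘L P j)).re
        ∧ (LinearMap.trace ℂ H ↑(E ∘L P j)).re ≤ (LinearMap.trace ℂ H ↑(P j)).re := by
      intro j
      refine ⟨effect_proj_bound hE (hPsa j) (hPidem j), ?_⟩
      have h0 := effect_proj_bound hE' (hPsa j) (hPidem j)
      have heq : LinearMap.trace ℂ H ↑((1 - E) ∘L P j)
          = LinearMap.trace ℂ H ↑(P j) - LinearMap.trace ℂ H ↑(E ∘L P j) := by
        rw [ContinuousLinearMap.sub_comp, clm_one_comp]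
        simp
      rw [heq] at h0
      simp only [Complex.sub_re] at h0
      linarith
    rw [hEA, hRHS, Complex.re_sum, Complex.re_sum]
    simp only [Complex.re_ofReal_mul]
    calc ∑ j, lam j * (LinearMap.trace ℂ H ↑(E ∘L P j)).re
        ≤ ∑ j, (if 0 < lam j then lam j * (LinearMap.trace ℂ H ↑(P j)).re else 0) := by
          refine Finset.sum_le_sum fun j _ => ?_
          by_cases h : 0 < lam j
          · simp only [if_pos h]
            exact mul_le_mul_of_nonneg_left (key j).2 h.le
          · simp only [if_neg h]
            exact mul_nonpos_of_nonpos_of_nonneg (not_lt.1 h) (key j).1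
      _ = ∑ j ∈ univ.filter (fun j => 0 < lam j),
            lam j * (LinearMap.trace ℂ H ↑(P j)).re := (Finset.sum_filter _ _).symm
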